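/- Let X be a proper, unbounded metric space, let ℓ : X → ℝ be a continuous function with ℓ(x) > 0 for every x ∈ X, and let x₀ ∈ X. Then the rescaled length at x₀ vanishes if and only if the infinite rescaled length vanishes: inf_{x ≠ x₀} ℓ(x)/d(x, x₀) = 0 if and only if sup_{R>0} inf_{x : d(x,x₀) ≥ R} ℓ(x)/d(x, x₀) = 0. -/

import Mathlib

open ENNReal

/-- The infinite rescaled length of a nonnegative (displacement) function `ℓ`,
relative to a basepoint `x₀`, valued in `[0,∞]`. -/
noncomputable def infiniteRescaledLength {X : Type*} [MetricSpace X]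
    (ℓ : X → ℝ) (x₀ : X) : ℝ≥0∞ :=
  ⨆ (R : ℝ) (_ : 0 < R), ⨅ (x : X) (_ : R ≤ dist x x₀),
    ENNReal.ofReal (ℓ x / dist x x₀)

/-- The rescaled length of `ℓ` at the basepoint `x₀`, valued in `[0,∞]`. -/
noncomputable def rescaledLength {X : Type*} [MetricSpace X]
    (ℓ : X → ℝ) (x₀ : X) : ℝ≥0∞ :=
  ⨅ (x : X) (_ : x ≠ x₀), ENNReal.ofReal (ℓ x / dist x x₀)

/-- On a proper unbounded metric space, for a continuous everywhere-positive
displacement function `ℓ`, the rescaled length at a basepoint vanishes iff the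
infinite rescaled length vanishes. -/
theorem rescaledLength_eq_zero_iff {X : Type*} [MetricSpace X] [ProperSpace X]
    (hub : ∀ (p : X) (R : ℝ), ∃ x : X, R ≤ dist x p)
    (ℓ : X → ℝ) (hcont : Continuous ℓ) (hpos : ∀ x, 0 < ℓ x) (x₀ : X) :
    rescaledLength ℓ x₀ = 0 ↔ infiniteRescaledLength ℓ x₀ = 0 := by
  constructor
  · intro h
    -- From rescaledLength = 0: for every ε > 0 there is x ≠ x₀ with ℓ x / dist x x₀ < ε.
    have key : ∀ ε : ℝ, 0 < ε → ∃ x : X, x ≠ x₀ ∧ ℓ x / dist x x₀ < ε := by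
      intro ε hε
      have hlt : rescaledLength ℓ x₀ < ENNReal.ofReal ε := by
        rw [h]; exact ENNReal.ofReal_pos.2 hε
      rw [rescaledLength, iInf_lt_iff] at hlt
      obtain ⟨x, hx⟩ := hlt
      rw [iInf_lt_iff] at hx
      obtain ⟨hxne, hx⟩ := hx
      exact ⟨x, hxne, (ENNReal.ofReal_lt_ofReal_iff hε).1 hx⟩
    rw [infiniteRescaledLength, iSup_eq_zero]
    intro R
    rw [iSup_eq_zero]
    intro hR
    refine le_antisymm ?_ zero_le
    refine ENNReal.le_of_forall_pos_le_add fun ε hε _ => ?_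
    rw [zero_add]
    -- min of ℓ on closed ball R
    have hcpt : IsCompact (Metric.closedBall x₀ R) := isCompact_closedBall x₀ R
    have hne : (Metric.closedBall x₀ R).Nonempty :=
      ⟨x₀, Metric.mem_closedBall_self hR.le⟩
    obtain ⟨z, hz, hzmin⟩ := hcpt.exists_isMinOn hne hcont.continuousOn
    have hm : 0 < ℓ z := hpos z
    set δ := min (ε : ℝ) (ℓ z / R) with hδ
    have hδpos : 0 < δ := lt_min hε (div_pos hm hR)
    obtain ⟨x, hxne, hxlt⟩ := key δ hδpos
    have hdpos : 0 < dist x x₀ := dist_pos.2 hxne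
    have hdR : R ≤ dist x x₀ := by
      by_contra hcon
      push_neg at hcon
      have hxball : x ∈ Metric.closedBall x₀ R := Metric.mem_closedBall.2 hcon.le
      have h1 : ℓ z ≤ ℓ x := hzmin hxball
      have h2 : ℓ z / R ≤ ℓ z / dist x x₀ :=
        div_le_div_of_nonneg_left hm.le hdpos hcon.le
      have h3 : ℓ z / dist x x₀ ≤ ℓ x / dist x x₀ :=
        div_le_div_of_nonneg_right h1 hdpos.le
      have : ℓ z / R ≤ ℓ x / dist x x₀ := h2.trans h3
      exact absurd (hxlt.trans_le (min_le_right _ _)) (not_lt.2 this)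
    calc (⨅ (y : X) (_ : R ≤ dist y x₀), ENNReal.ofReal (ℓ y / dist y x₀))
        ≤ ENNReal.ofReal (ℓ x / dist x x₀) := iInf₂_le x hdR
      _ ≤ ENNReal.ofReal δ := ENNReal.ofReal_le_ofReal hxlt.le
      _ ≤ ENNReal.ofReal ε := ENNReal.ofReal_le_ofReal (min_le_left _ _)
      _ ≤ ↑ε := ENNReal.ofReal_coe_nnreal.le
  · intro h
    rw [infiniteRescaledLength, iSup_eq_zero] at h
    have h1 := h 1
    rw [iSup_eq_zero] at h1
    have h1 := h1 one_pos
    refine le_antisymm ?_ zero_le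
    rw [← h1]
    refine le_iInf₂ fun x hx => ?_
    have hxne : x ≠ x₀ := by
      intro hmm
      rw [hmm, dist_self] at hx
      linarith
    exact iInf₂_le x hxne
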